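/- arXiv:2210.00244 — 4 statements merged into one kernel-verified Lean document; each statement's English description precedes it below -/
import Mathlib

section
/- For the Laplacian kernel K(x) = e^{−|x|} on ℝ, for every x ≠ 0 the quantity s_K(x) := (1 + K(2x) − 2K(x)²)/(2(1 − K(x))²) equals (1 + e^{−|x|})/(2(1 − e^{−|x|})), and consequently s_K(x) ≥ 1/(2|x|) for every x ≠ 0. -/
noncomputable section

/-- The quantity `s_K(x)` for a kernel `K : ℝ → ℝ`. -/
def sK (K : ℝ → ℝ) (x : ℝ) : ℝ :=
  (1 + K (2 * x) - 2 * (K x)^2) / (2 * (1 - K x)^2)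

/-- for the Laplacian kernel `K(x) = e^{-|x|}` on ℝ and `x ≠ 0`,
`s_K(x) = (1 + e^{-|x|})/(2(1 - e^{-|x|}))`, and consequently `s_K(x) ≥ 1/(2|x|)`. -/
theorem sK_laplacian (x : ℝ) (hx : x ≠ 0) :
    sK (fun t => Real.exp (-|t|)) x
        = (1 + Real.exp (-|x|)) / (2 * (1 - Real.exp (-|x|))) ∧
      sK (fun t => Real.exp (-|t|)) x ≥ 1 / (2 * |x|) := by
  set e := Real.exp (-|x|) with he
  have habs : 0 < |x| := abs_pos.mpr hx
  have he1 : e < 1 := by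
    rw [he]
    exact Real.exp_lt_one_iff.mpr (by linarith)
  have hepos : 0 < e := Real.exp_pos _
  have h2x : Real.exp (-|2 * x|) = e ^ 2 := by
    rw [abs_mul, abs_two, he, ← Real.exp_nat_mul]
    ring_nf
  have heq : sK (fun t => Real.exp (-|t|)) x
      = (1 + e) / (2 * (1 - e)) := by
    simp only [sK, h2x]
    rw [show (1 : ℝ) + e ^ 2 - 2 * e ^ 2 = (1 + e) * (1 - e) by ring,
      show (2 : ℝ) * (1 - e)^2 = (2 * (1 - e)) * (1 - e) by ring]
    rw [mul_div_mul_right _ _ (by linarith)]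
  refine ⟨heq, ?_⟩
  rw [heq, ge_iff_le, div_le_div_iff₀ (by linarith) (by linarith)]
  have hx1 : 1 - e ≤ |x| := by
    have := Real.add_one_le_exp (-|x|)
    linarith
  nlinarith [mul_pos habs hepos]
end
end

section
/- Let K : ℝ^d → ℝ be a shift-invariant kernel with K(0) = 1 admitting a Bochner representation with density p, and suppose K is real-analytic on {x : ‖x‖₁ < r} for some r > 0. Let ω have density p and define X(x) := cos⟨ω, x⟩ − K(x). Then for every integer k ≥ 0 there exist constants C, η > 0 such that |E[X(x)^k]| ≤ C · ‖x‖₁^{2k} for all x with ‖x‖₁ ≤ η; that is, E[X(x)^k] vanishes to order at least 2k at the origin. -/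
open MeasureTheory

noncomputable section

/-- The ℓ₁ norm on `ℝ^d`. -/
def l1 {d : ℕ} (x : EuclideanSpace ℝ (Fin d)) : ℝ := ∑ i, |x i|


open Finset in
lemma trig_pow (j : ℕ) (θ : ℝ) :
    (2:ℝ)^j * (1 - Real.cos θ)^j
      = ∑ i ∈ Finset.range (2*j+1),
          (-1:ℝ)^(i+j) * ((2*j).choose i : ℝ) * Real.cos (((i:ℝ) - (j:ℝ)) * θ) := by
  have key : ((((2:ℝ)^j * (1 - Real.cos θ)^j : ℝ)) : ℂ)
      = ∑ i ∈ Finset.range (2*j+1),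
          (((-1:ℝ)^(i+j) * ((2*j).choose i : ℝ) : ℝ) : ℂ)
            * Complex.exp ((((i:ℝ) - (j:ℝ)) * θ : ℝ) * Complex.I) := by
    set z : ℂ := Complex.exp (θ * Complex.I) with hzdef
    have hz : z ≠ 0 := Complex.exp_ne_zero _
    have hcos : ((Real.cos θ : ℝ) : ℂ) = (z + z⁻¹) / 2 := by
      rw [hzdef, ← Complex.exp_neg, Complex.ofReal_cos, Complex.cos, neg_mul]
    have h1 : (2:ℂ) * (1 - (Real.cos θ : ℝ)) = -(z - 1)^2 * z⁻¹ := by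
      rw [hcos]; field_simp; ring
    have hsub : (z - (1:ℂ))^(2*j) = ∑ i ∈ range (2*j+1), (-1:ℂ)^i * ((2*j).choose i : ℂ) * z^i := by
      rw [sub_pow]
      refine Finset.sum_congr rfl fun i hi => ?_
      have h4 : (-1:ℂ)^(i+2*j) = (-1)^i := by rw [pow_add, pow_mul]; simp
      rw [h4, one_pow]; ring
    have h2 : ((2:ℂ) * (1 - (Real.cos θ : ℝ)))^j = ∑ i ∈ range (2*j+1),
        (-1:ℂ)^(i+j) * ((2*j).choose i : ℂ) * (z^i * (z⁻¹)^j) := by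
      calc ((2:ℂ) * (1 - (Real.cos θ : ℝ)))^j = ((-1:ℂ))^j * (z-1)^(2*j) * (z⁻¹)^j := by
            rw [h1, mul_pow, neg_pow, ← pow_mul]
        _ = ((-1:ℂ))^j * (∑ i ∈ range (2*j+1), (-1:ℂ)^i * ((2*j).choose i : ℂ) * z^i) * (z⁻¹)^j := by
            rw [hsub]
        _ = _ := by
            rw [mul_assoc, Finset.sum_mul, Finset.mul_sum]
            refine Finset.sum_congr rfl fun i hi => ?_
            rw [pow_add]; ring
    have h3 : ∀ i : ℕ, z^i * (z⁻¹)^j = Complex.exp ((((i:ℝ) - (j:ℝ)) * θ : ℝ) * Complex.I) := by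
      intro i
      rw [hzdef, ← Complex.exp_neg, ← Complex.exp_nat_mul, ← Complex.exp_nat_mul,
        ← Complex.exp_add]
      congr 1
      push_cast
      ring
    calc ((((2:ℝ)^j * (1 - Real.cos θ)^j : ℝ)) : ℂ) = ((2:ℂ) * (1 - (Real.cos θ : ℝ)))^j := by
          push_cast; rw [mul_pow]
      _ = _ := by
          rw [h2]
          refine Finset.sum_congr rfl fun i hi => ?_
          rw [h3 i]
          push_cast
          ring
  have h := congrArg Complex.re key
  rw [Complex.ofReal_re, Complex.re_sum] at h
  simp only [Complex.re_ofReal_mul, Complex.exp_ofReal_mul_I_re] at h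
  exact h


open Finset in
lemma diff_sum_step (m : ℕ) (f : ℝ → ℝ) (a : ℝ) :
    ∑ i ∈ Finset.range (m+2), (-1:ℝ)^i * ((m+1).choose i : ℝ) * f (a + i)
      = ∑ i ∈ Finset.range (m+1), (-1:ℝ)^i * (m.choose i : ℝ) * (f (a + i) - f (a + i + 1)) := by
  have hT : ∑ i ∈ Finset.range (m+1), (-1:ℝ)^i * (m.choose (i+1) : ℝ) * f (a + (i+1))
      = f a - ∑ i ∈ Finset.range (m+1), (-1:ℝ)^i * (m.choose i : ℝ) * f (a + i) := by
    have h0 := Finset.sum_range_succ' (fun i => (-1:ℝ)^i * (m.choose i : ℝ) * f (a + i)) m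
    -- h0 : ∑_{i∈range(m+1)} g i = ∑_{i∈range m} g (i+1) + g 0
    have hext : ∑ i ∈ Finset.range (m+1), (-1:ℝ)^i * (m.choose (i+1) : ℝ) * f (a + (i+1))
        = ∑ i ∈ Finset.range m, (-1:ℝ)^i * (m.choose (i+1) : ℝ) * f (a + (i+1)) := by
      rw [Finset.sum_range_succ, Nat.choose_succ_self]
      simp
    rw [hext]
    have : ∑ i ∈ Finset.range m, (-1:ℝ)^(i+1) * (m.choose (i+1) : ℝ) * f (a + (i+1))
        = ∑ i ∈ Finset.range (m+1), (-1:ℝ)^i * (m.choose i : ℝ) * f (a + i) - f a := by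
      rw [h0]; push_cast; simp
    have h2 : ∑ i ∈ Finset.range m, (-1:ℝ)^i * (m.choose (i+1) : ℝ) * f (a + (i+1))
        = - ∑ i ∈ Finset.range m, (-1:ℝ)^(i+1) * (m.choose (i+1) : ℝ) * f (a + (i+1)) := by
      rw [← Finset.sum_neg_distrib]
      refine Finset.sum_congr rfl fun i hi => ?_
      rw [pow_succ]; ring
    rw [h2, this]; ring
  have h0 := Finset.sum_range_succ' (fun i => (-1:ℝ)^i * (((m+1).choose i) : ℝ) * f (a + i)) (m+1)
  rw [h0]
  push_cast
  have hpas : ∀ i ∈ Finset.range (m+1), (-1:ℝ)^(i+1) * (((m+1).choose (i+1)) : ℝ) * f (a + (i+1))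
      = -((-1:ℝ)^i * (m.choose i : ℝ) * f (a + (i+1))) - (-1:ℝ)^i * (m.choose (i+1) : ℝ) * f (a + (i+1)) := by
    intro i hi
    rw [Nat.choose_succ_succ]
    push_cast
    rw [pow_succ]
    ring
  rw [Finset.sum_congr rfl hpas, Finset.sum_sub_distrib]
  have : ∑ i ∈ Finset.range (m+1), -((-1:ℝ)^i * (m.choose i : ℝ) * f (a + (i+1)))
      = - ∑ i ∈ Finset.range (m+1), (-1:ℝ)^i * (m.choose i : ℝ) * f (a + (i+1)) := by
    rw [Finset.sum_neg_distrib]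
  rw [this, hT]
  simp only [mul_sub, add_zero]
  rw [Finset.sum_sub_distrib]
  simp only [pow_zero, Nat.choose_zero_right, Nat.cast_one, ← add_assoc]
  ring


open Finset Set in
lemma diff_bound (m : ℕ) : ∀ (F : ℕ → ℝ → ℝ) (a M : ℝ),
    (∀ n < m, ∀ t ∈ Set.Icc a (a + m), HasDerivAt (F n) (F (n+1) t) t) →
    (∀ t ∈ Set.Icc a (a + m), |F m t| ≤ M) →
    |∑ i ∈ Finset.range (m+1), (-1:ℝ)^i * (m.choose i : ℝ) * F 0 (a + i)| ≤ M := by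
  induction m with
  | zero =>
    intro F a M _ hM
    simpa using hM a ⟨le_refl a, by simp⟩
  | succ m ih =>
    intro F a M hder hM
    have hsub : ∀ (t : ℝ), t ∈ Set.Icc a (a + m) → t ∈ Set.Icc a (a + (m+1:ℕ)) ∧
        t + 1 ∈ Set.Icc a (a + (m+1:ℕ)) := by
      intro t ht
      obtain ⟨h1, h2⟩ := ht
      push_cast
      constructor <;> constructor <;> push_cast at h2 ⊢ <;> linarith
    rw [show m + 1 + 1 = m + 2 from rfl, diff_sum_step m (F 0) a]
    apply ih (fun n t => F n t - F n (t+1)) a M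
    · intro n hn t ht
      obtain ⟨ht1, ht2⟩ := hsub t ht
      have h1 : HasDerivAt (F n) (F (n+1) t) t := hder n (by omega) t ht1
      have h2 : HasDerivAt (fun s => F n (s+1)) (F (n+1) (t+1)) t := by
        have h3 := hder n (by omega) (t+1) ht2
        have h4 : HasDerivAt (fun s : ℝ => s + 1) 1 t := (hasDerivAt_id t).add_const 1
        have := h3.comp t h4
        rw [mul_one] at this
        exact this
      exact h1.sub h2
    · intro t ht
      obtain ⟨ht1, ht2⟩ := hsub t ht
      have hlt : t < t + 1 := by linarith
      have hcont : ContinuousOn (F m) (Set.Icc t (t+1)) := by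
        intro s hs
        have hs' : s ∈ Set.Icc a (a + (m+1:ℕ)) := by
          obtain ⟨u1, u2⟩ := hs; obtain ⟨v1, v2⟩ := ht1; obtain ⟨w1, w2⟩ := ht2
          exact ⟨le_trans v1 u1, le_trans u2 w2⟩
        exact ((hder m (by omega) s hs').continuousAt).continuousWithinAt
      have hdiff : ∀ s ∈ Set.Ioo t (t+1), HasDerivAt (F m) (F (m+1) s) s := by
        intro s hs
        apply hder m (by omega) s
        obtain ⟨u1, u2⟩ := hs; obtain ⟨v1, v2⟩ := ht1; obtain ⟨w1, w2⟩ := ht2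
        exact ⟨le_trans v1 (le_of_lt u1), le_trans (le_of_lt u2) w2⟩
      obtain ⟨c, hc, hceq⟩ := exists_hasDerivAt_eq_slope (F m) (F (m+1)) hlt hcont hdiff
      have : F m t - F m (t+1) = -(F (m+1) c) := by
        rw [hceq]; field_simp; ring
      rw [this, abs_neg]
      apply hM c
      obtain ⟨u1, u2⟩ := hc; obtain ⟨v1, v2⟩ := ht1; obtain ⟨w1, w2⟩ := ht2
      exact ⟨le_trans v1 (le_of_lt u1), le_trans (le_of_lt u2) w2⟩


/-- for `K` analytic on the ℓ₁-ball of radius `r` admitting a Bochner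
representation with law `μp`, for every `k` the moment `E[(cos⟨ω,x⟩ - K(x))^k]` vanishes to
order at least `2k` at the origin: `|E[X(x)^k]| ≤ C ‖x‖₁^{2k}` for `‖x‖₁ ≤ η`. -/
theorem rff_moment_vanishing_order {d : ℕ}
    (K : EuclideanSpace ℝ (Fin d) → ℝ) (hK0 : K 0 = 1)
    (μp : Measure (EuclideanSpace ℝ (Fin d))) [IsProbabilityMeasure μp]
    (hBochner : ∀ x, K x = ∫ w, Real.cos (inner ℝ w x : ℝ) ∂μp)
    (r : ℝ) (hr : 0 < r) (hAnalytic : ∀ x, l1 x < r → AnalyticAt ℝ K x)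
    (k : ℕ) :
    ∃ C > (0:ℝ), ∃ η > (0:ℝ), ∀ x : EuclideanSpace ℝ (Fin d), l1 x ≤ η →
      |∫ w, (Real.cos (inner ℝ w x : ℝ) - K x) ^ k ∂μp| ≤ C * (l1 x) ^ (2 * k) := by
  classical
  -- basic l1 facts
  have hl1_nonneg : ∀ y : EuclideanSpace ℝ (Fin d), 0 ≤ l1 y := by
    intro y; exact Finset.sum_nonneg fun i _ => abs_nonneg _
  have hnorm_le_l1 : ∀ y : EuclideanSpace ℝ (Fin d), ‖y‖ ≤ l1 y := by
    intro y
    rw [EuclideanSpace.norm_eq]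
    have h1 : ∑ i, ‖y i‖^2 ≤ (l1 y)^2 := by
      have : ∀ i ∈ Finset.univ, ‖y i‖^2 ≤ |y i| * l1 y := by
        intro i _
        rw [Real.norm_eq_abs, sq]
        exact mul_le_mul_of_nonneg_left
          (Finset.single_le_sum (f := fun i => |y i|) (fun i _ => abs_nonneg _) (Finset.mem_univ i))
          (abs_nonneg _)
      calc ∑ i, ‖y i‖^2 ≤ ∑ i, |y i| * l1 y := Finset.sum_le_sum this
        _ = (l1 y)^2 := by rw [← Finset.sum_mul, sq]; rfl
    calc Real.sqrt (∑ i, ‖y i‖^2) ≤ Real.sqrt ((l1 y)^2) := Real.sqrt_le_sqrt h1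
      _ = l1 y := Real.sqrt_sq (hl1_nonneg y)
  have hcoord : ∀ (y : EuclideanSpace ℝ (Fin d)) (i : Fin d), |y i| ≤ ‖y‖ := by
    intro y i
    rw [EuclideanSpace.norm_eq, ← Real.sqrt_sq_eq_abs]
    apply Real.sqrt_le_sqrt
    have := Finset.single_le_sum (f := fun i => ‖y i‖^2)
      (fun i (_ : i ∈ Finset.univ) => sq_nonneg _) (Finset.mem_univ i)
    simpa [Real.norm_eq_abs, sq_abs] using this
  have hl1_le : ∀ y : EuclideanSpace ℝ (Fin d), l1 y ≤ d * ‖y‖ := by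
    intro y
    calc l1 y ≤ ∑ _i : Fin d, ‖y‖ := Finset.sum_le_sum fun i _ => hcoord y i
      _ = d * ‖y‖ := by rw [Finset.sum_const, Finset.card_univ, Fintype.card_fin, nsmul_eq_mul]
  have hl1_cont : Continuous fun y : EuclideanSpace ℝ (Fin d) => l1 y := by
    apply continuous_finset_sum
    intro i _
    exact continuous_abs.comp (EuclideanSpace.proj i).continuous
  -- integrability helper
  have hint : ∀ (g : EuclideanSpace ℝ (Fin d) → ℝ) (c : ℝ), Continuous g → (∀ w, |g w| ≤ c) →
      Integrable g μp := by
    intro g c hg hb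
    exact (integrable_const c).mono' hg.aestronglyMeasurable
      (Filter.Eventually.of_forall (by simpa [Real.norm_eq_abs] using hb))
  -- analytic structure
  set U : Set (EuclideanSpace ℝ (Fin d)) := {y | l1 y < r} with hU
  have hUopen : IsOpen U := isOpen_lt hl1_cont continuous_const
  have hanal : AnalyticOnNhd ℝ K U := fun y hy => hAnalytic y hy
  set ρ : ℝ := r / (d + 1) with hρ
  have hρpos : 0 < ρ := by positivity
  set B : Set (EuclideanSpace ℝ (Fin d)) := Metric.closedBall 0 ρ with hB
  have hBU : B ⊆ U := by
    intro y hy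
    have h1 : ‖y‖ ≤ ρ := by simpa [hB, Metric.mem_closedBall, dist_zero_right] using hy
    have h2 : l1 y ≤ d * ρ := le_trans (hl1_le y) (by nlinarith [hl1_le y, norm_nonneg y])
    have h3 : (d:ℝ) * ρ < r := by
      rw [hρ]
      calc (d:ℝ) * (r / (d+1)) < (d+1) * (r / (d+1)) := by
            apply mul_lt_mul_of_pos_right (by linarith) (by positivity)
        _ = r := by field_simp
    exact lt_of_le_of_lt h2 h3
  have hBcompact : IsCompact B := isCompact_closedBall 0 ρ
  have hMex : ∀ n : ℕ, ∃ Mn : ℝ, 0 < Mn ∧ ∀ y ∈ B, ‖iteratedFDeriv ℝ n K y‖ ≤ Mn := by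
    intro n
    have hco : ContinuousOn (iteratedFDeriv ℝ n K) B := by
      intro y hy
      exact ((hanal.iteratedFDeriv_of_isOpen hUopen n) y (hBU hy)).continuousAt.continuousWithinAt
    obtain ⟨c, hc⟩ := hBcompact.exists_bound_of_continuousOn hco
    refine ⟨|c| + 1, by positivity, fun y hy => (hc y hy).trans ?_⟩
    calc c ≤ |c| := le_abs_self c
      _ ≤ |c| + 1 := by linarith
  choose M hMpos hMB using hMex
  -- dispose of k = 0
  rcases Nat.eq_zero_or_pos k with hk0 | hkpos
  · subst hk0
    refine ⟨1, one_pos, 1, one_pos, fun x _ => ?_⟩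
    simp
  -- main case
  set η : ℝ := ρ / (k + 1) with hη
  have hηpos : 0 < η := by positivity
  set C : ℝ := (∑ j ∈ Finset.range (k+1), (k.choose j : ℝ) * (M 2)^j * M (2*(k-j))) + 1 with hC
  have hCsum_nonneg : 0 ≤ ∑ j ∈ Finset.range (k+1), (k.choose j : ℝ) * (M 2)^j * M (2*(k-j)) := by
    apply Finset.sum_nonneg
    intro j _
    have := hMpos 2
    have := hMpos (2*(k-j))
    positivity
  have hCpos : 0 < C := by rw [hC]; linarith
  refine ⟨C, hCpos, η, hηpos, fun x hx => ?_⟩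
  have hxnn : 0 ≤ l1 x := hl1_nonneg x
  have hnx : ‖x‖ ≤ l1 x := hnorm_le_l1 x
  have hinner_cont : ∀ c : ℝ, Continuous fun w : EuclideanSpace ℝ (Fin d) =>
      Real.cos (c * (inner ℝ w x : ℝ)) := by
    intro c
    exact Real.continuous_cos.comp (continuous_const.mul (continuous_id.inner continuous_const))
  have hint_cospow : ∀ m : ℕ, Integrable
      (fun w : EuclideanSpace ℝ (Fin d) => (1 - Real.cos (inner ℝ w x : ℝ))^m) μp := by
    intro m
    apply hint _ (2^m)
    · apply Continuous.pow
      apply Continuous.sub continuous_const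
      simpa using hinner_cont 1
    · intro w
      rw [abs_pow]
      apply pow_le_pow_left₀ (abs_nonneg _)
      have := Real.neg_one_le_cos (inner ℝ w x : ℝ)
      have := Real.cos_le_one (inner ℝ w x : ℝ)
      rw [abs_le]; constructor <;> linarith
  -- the G bound
  have Gbound : ∀ j : ℕ, j ≤ k →
      |∫ w, (1 - Real.cos (inner ℝ w x : ℝ))^j ∂μp| ≤ M (2*j) * l1 x ^ (2*j) := by
    intro j hjk
    set F : ℕ → ℝ → ℝ :=
      fun n t => iteratedFDeriv ℝ n K (t • x) (fun _ => x) with hF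
    have hmemB : ∀ t : ℝ, |t| ≤ (j:ℝ) → t • x ∈ B := by
      intro t ht
      have h1 : ‖t • x‖ = |t| * ‖x‖ := by rw [norm_smul, Real.norm_eq_abs]
      have h2 : ‖t • x‖ ≤ ρ := by
        rw [h1]
        have hj : (j:ℝ) ≤ (k:ℝ) := by exact_mod_cast hjk
        have h3 : |t| * ‖x‖ ≤ (k:ℝ) * η := by
          apply mul_le_mul (le_trans ht hj) (le_trans hnx hx) (norm_nonneg x)
          positivity
        have h4 : (k:ℝ) * η ≤ ρ := by
          rw [hη]
          calc (k:ℝ) * (ρ/(k+1)) ≤ (k+1) * (ρ/(k+1)) := by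
                apply mul_le_mul_of_nonneg_right (by linarith) (by positivity)
            _ = ρ := by field_simp
        linarith
      simpa [hB, Metric.mem_closedBall, dist_zero_right] using h2
    have hchain : ∀ (n : ℕ) (t : ℝ), t • x ∈ U → HasDerivAt (F n) (F (n+1) t) t := by
      intro n t htU
      have hdiffn : DifferentiableAt ℝ (iteratedFDeriv ℝ n K) (t • x) :=
        ((hanal.iteratedFDeriv_of_isOpen hUopen n) (t • x) htU).differentiableAt
      have hcurve : HasDerivAt (fun s : ℝ => s • x) x t := by
        simpa using (hasDerivAt_id t).smul_const x
      have h1 := hdiffn.hasFDerivAt.comp_hasDerivAt t hcurve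
      have h2 := (ContinuousMultilinearMap.apply ℝ (fun _ : Fin n => EuclideanSpace ℝ (Fin d)) ℝ
          (fun _ => x)).hasFDerivAt.comp_hasDerivAt t h1
      exact h2
    have hFtop : ∀ t : ℝ, t • x ∈ B → |F (2*j) t| ≤ M (2*j) * l1 x ^ (2*j) := by
      intro t htB
      have h1 : |F (2*j) t| ≤ ‖iteratedFDeriv ℝ (2*j) K (t • x)‖ * ∏ _i : Fin (2*j), ‖x‖ := by
        rw [← Real.norm_eq_abs]
        exact (iteratedFDeriv ℝ (2*j) K (t • x)).le_opNorm _
      have h2 : ∏ _i : Fin (2*j), ‖x‖ = ‖x‖^(2*j) := by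
        rw [Finset.prod_const, Finset.card_univ, Fintype.card_fin]
      rw [h2] at h1
      calc |F (2*j) t| ≤ ‖iteratedFDeriv ℝ (2*j) K (t • x)‖ * ‖x‖^(2*j) := h1
        _ ≤ M (2*j) * l1 x ^ (2*j) := by
            apply mul_le_mul (hMB (2*j) _ htB) (pow_le_pow_left₀ (norm_nonneg x) hnx _)
              (by positivity) (le_of_lt (hMpos (2*j)))
    have habs : ∀ t : ℝ, t ∈ Set.Icc (-(j:ℝ)) (-(j:ℝ) + (2*j:ℕ)) → |t| ≤ (j:ℝ) := by
      intro t ht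
      obtain ⟨h1, h2⟩ := ht
      push_cast at h2
      rw [abs_le]; constructor <;> linarith
    have hkey := diff_bound (2*j) F (-(j:ℝ)) (M (2*j) * l1 x ^ (2*j))
      (by
        intro n _ t ht
        exact hchain n t (hBU (hmemB t (habs t ht))))
      (by
        intro t ht
        exact hFtop t (hmemB t (habs t ht)))
    -- integral identity
    have hGid : (2:ℝ)^j * ∫ w, (1 - Real.cos (inner ℝ w x : ℝ))^j ∂μp
        = ∑ i ∈ Finset.range (2*j+1), (-1:ℝ)^(i+j) * ((2*j).choose i : ℝ)
            * K ((((i:ℝ) - (j:ℝ))) • x) := by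
      rw [← MeasureTheory.integral_const_mul]
      rw [integral_congr_ae (Filter.EventuallyEq.of_eq
        (funext fun w => trig_pow j (inner ℝ w x : ℝ)))]
      rw [integral_finset_sum _ (fun i _ =>
        (hint _ 1 (hinner_cont _) (fun w => Real.abs_cos_le_one _)).const_mul _)]
      refine Finset.sum_congr rfl fun i _ => ?_
      rw [MeasureTheory.integral_const_mul]
      congr 1
      rw [hBochner ((((i:ℝ) - (j:ℝ))) • x)]
      apply integral_congr_ae
      apply Filter.EventuallyEq.of_eq
      funext w
      rw [real_inner_smul_right]
    have hsum_eq : ∑ i ∈ Finset.range (2*j+1), (-1:ℝ)^(i+j) * ((2*j).choose i : ℝ)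
          * K ((((i:ℝ) - (j:ℝ))) • x)
        = (-1:ℝ)^j * ∑ i ∈ Finset.range (2*j+1), (-1:ℝ)^i * ((2*j).choose i : ℝ)
          * F 0 (-(j:ℝ) + i) := by
      rw [Finset.mul_sum]
      refine Finset.sum_congr rfl fun i _ => ?_
      have h5 : F 0 (-(j:ℝ) + i) = K ((((i:ℝ) - (j:ℝ))) • x) := by
        rw [hF]
        simp only [iteratedFDeriv_zero_apply]
        congr 2
        ring
      rw [h5, pow_add]
      ring
    have h2j : (1:ℝ) ≤ 2^j := one_le_pow₀ one_le_two
    calc |∫ w, (1 - Real.cos (inner ℝ w x : ℝ))^j ∂μp|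
        ≤ 2^j * |∫ w, (1 - Real.cos (inner ℝ w x : ℝ))^j ∂μp| :=
          le_mul_of_one_le_left (abs_nonneg _) h2j
      _ = |(2:ℝ)^j * ∫ w, (1 - Real.cos (inner ℝ w x : ℝ))^j ∂μp| := by
          rw [abs_mul, abs_of_nonneg (by positivity : (0:ℝ) ≤ 2^j)]
      _ = |(-1:ℝ)^j * ∑ i ∈ Finset.range (2*j+1), (-1:ℝ)^i * ((2*j).choose i : ℝ)
            * F 0 (-(j:ℝ) + i)| := by rw [hGid, hsum_eq]
      _ = |∑ i ∈ Finset.range (2*j+1), (-1:ℝ)^i * ((2*j).choose i : ℝ)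
            * F 0 (-(j:ℝ) + i)| := by
          rw [abs_mul, abs_pow, abs_neg, abs_one, one_pow, one_mul]
      _ ≤ M (2*j) * l1 x ^ (2*j) := hkey
  -- bound on 1 - K x
  have hG1 : ∫ w, (1 - Real.cos (inner ℝ w x : ℝ))^1 ∂μp = 1 - K x := by
    simp only [pow_one]
    rw [integral_sub (integrable_const 1)
      (by simpa using hint _ 1 (by simpa using hinner_cont 1) (fun w => Real.abs_cos_le_one _))]
    rw [← hBochner x]
    simp
  have hAbound : |1 - K x| ≤ M 2 * l1 x ^ 2 := by
    have h := Gbound 1 hkpos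
    rw [hG1] at h
    simpa using h
  -- expansion of the k-th moment
  have hexp : ∫ w, (Real.cos (inner ℝ w x : ℝ) - K x)^k ∂μp
      = ∑ j ∈ Finset.range (k+1), ((-1:ℝ)^(j+k) * (1 - K x)^j * (k.choose j : ℝ))
          * ∫ w, (1 - Real.cos (inner ℝ w x : ℝ))^(k-j) ∂μp := by
    have hpt : ∀ w : EuclideanSpace ℝ (Fin d), (Real.cos (inner ℝ w x : ℝ) - K x)^k
        = ∑ j ∈ Finset.range (k+1), ((-1:ℝ)^(j+k) * (1 - K x)^j * (k.choose j : ℝ))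
            * (1 - Real.cos (inner ℝ w x : ℝ))^(k-j) := by
      intro w
      have h0 : Real.cos (inner ℝ w x : ℝ) - K x
          = (1 - K x) - (1 - Real.cos (inner ℝ w x : ℝ)) := by ring
      rw [h0, sub_pow]
      exact Finset.sum_congr rfl fun j _ => by ring
    rw [integral_congr_ae (Filter.EventuallyEq.of_eq (funext hpt))]
    rw [integral_finset_sum _ (fun j _ => (hint_cospow (k-j)).const_mul _)]
    exact Finset.sum_congr rfl fun j _ => MeasureTheory.integral_const_mul _ _
  -- final bound
  rw [hexp]
  calc |∑ j ∈ Finset.range (k+1), ((-1:ℝ)^(j+k) * (1 - K x)^j * (k.choose j : ℝ))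
          * ∫ w, (1 - Real.cos (inner ℝ w x : ℝ))^(k-j) ∂μp|
      ≤ ∑ j ∈ Finset.range (k+1), |((-1:ℝ)^(j+k) * (1 - K x)^j * (k.choose j : ℝ))
          * ∫ w, (1 - Real.cos (inner ℝ w x : ℝ))^(k-j) ∂μp| :=
        Finset.abs_sum_le_sum_abs _ _
    _ ≤ ∑ j ∈ Finset.range (k+1), (k.choose j : ℝ) * (M 2)^j * M (2*(k-j)) * l1 x ^ (2*k) := by
        apply Finset.sum_le_sum
        intro j hj
        have hjk : j ≤ k := by
          rw [Finset.mem_range] at hj; omega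
        have h1 : |((-1:ℝ)^(j+k) * (1 - K x)^j * (k.choose j : ℝ))
            * ∫ w, (1 - Real.cos (inner ℝ w x : ℝ))^(k-j) ∂μp|
            = |1 - K x|^j * (k.choose j : ℝ)
              * |∫ w, (1 - Real.cos (inner ℝ w x : ℝ))^(k-j) ∂μp| := by
          rw [abs_mul, abs_mul, abs_mul, abs_pow, abs_pow, abs_neg, abs_one, one_pow, one_mul,
            Nat.abs_cast]
        rw [h1]
        have h2 : |1 - K x|^j ≤ (M 2 * l1 x ^ 2)^j :=
          pow_le_pow_left₀ (abs_nonneg _) hAbound j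
        have h3 := Gbound (k-j) (Nat.sub_le k j)
        calc |1 - K x|^j * (k.choose j : ℝ)
              * |∫ w, (1 - Real.cos (inner ℝ w x : ℝ))^(k-j) ∂μp|
            ≤ (M 2 * l1 x ^ 2)^j * (k.choose j : ℝ) * (M (2*(k-j)) * l1 x ^ (2*(k-j))) := by
              apply mul_le_mul
              · exact mul_le_mul_of_nonneg_right h2 (Nat.cast_nonneg _)
              · exact h3
              · exact abs_nonneg _
              · exact mul_nonneg (pow_nonneg (mul_nonneg (le_of_lt (hMpos 2))
                  (by positivity)) j) (Nat.cast_nonneg _)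
          _ = (k.choose j : ℝ) * (M 2)^j * M (2*(k-j)) * l1 x ^ (2*k) := by
              rw [mul_pow, ← pow_mul]
              have : 2 * j + 2 * (k - j) = 2 * k := by omega
              calc M 2 ^ j * (l1 x ^ (2*j)) * (k.choose j : ℝ)
                    * (M (2*(k-j)) * l1 x ^ (2*(k-j)))
                  = (k.choose j : ℝ) * M 2 ^ j * M (2*(k-j))
                    * (l1 x ^ (2*j) * l1 x ^ (2*(k-j))) := by ring
                _ = (k.choose j : ℝ) * M 2 ^ j * M (2*(k-j)) * l1 x ^ (2*k) := by
                    rw [← pow_add, this]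
    _ = (∑ j ∈ Finset.range (k+1), (k.choose j : ℝ) * (M 2)^j * M (2*(k-j))) * l1 x ^ (2*k) := by
        rw [Finset.sum_mul]
    _ ≤ C * l1 x ^ (2*k) := by
        apply mul_le_mul_of_nonneg_right _ (by positivity)
        rw [hC]
        linarith
end
end

section
/- For all integers k, l, s with 0 ≤ l ≤ k, 0 ≤ s, and s < 2(k − l), the following sum vanishes: Σ_{i=0}^{k} C(k,i) · C(i,l) · (−1/2)^{k−i} · Σ_{j=0}^{k−i} C(k−i,j) · (2j − k + i)^s = 0, where C(·,·) denotes binomial coefficients and 0^0 is interpreted as 1. -/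
open Polynomial Finset

noncomputable def TopD (n : ℕ) (p : ℝ[X]) : ℝ[X] := X * derivative p - C (n:ℝ) * p

lemma TopD_dvd (n e : ℕ) (p : ℝ[X]) (h : ((X:ℝ[X]) - 1)^(e+1) ∣ p) :
    ((X:ℝ[X]) - 1)^e ∣ TopD n p := by
  obtain ⟨q, rfl⟩ := h
  refine ⟨X * (C ((e:ℝ)+1) * q + (X - 1) * derivative q) - C (n:ℝ) * (X - 1) * q, ?_⟩
  rw [TopD, derivative_mul, derivative_pow, derivative_sub, derivative_X, derivative_one]
  push_cast
  ring

lemma TopD_iter_dvd (n s : ℕ) : ∀ (e : ℕ) (p : ℝ[X]), ((X:ℝ[X]) - 1)^(s+e) ∣ p →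
    ((X:ℝ[X]) - 1)^e ∣ (TopD n)^[s] p := by
  induction s with
  | zero => intro e p h; simpa using h
  | succ s ih =>
    intro e p h
    rw [Function.iterate_succ_apply]
    exact ih e (TopD n p) (TopD_dvd n _ p (by rwa [show s + e + 1 = s + 1 + e by ring]))

lemma TopD_sum {ι : Type*} (n : ℕ) (t : Finset ι) (f : ι → ℝ[X]) :
    TopD n (∑ i ∈ t, f i) = ∑ i ∈ t, TopD n (f i) := by
  simp [TopD, Finset.mul_sum, Finset.sum_sub_distrib]

lemma TopD_iter_sum {ι : Type*} (n s : ℕ) (t : Finset ι) (f : ι → ℝ[X]) :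
    (TopD n)^[s] (∑ i ∈ t, f i) = ∑ i ∈ t, (TopD n)^[s] (f i) := by
  induction s generalizing f with
  | zero => simp
  | succ s ih =>
    rw [Function.iterate_succ_apply, TopD_sum, ih]
    simp [Function.iterate_succ_apply]

lemma TopD_monomial (n : ℕ) (a : ℝ) (w : ℕ) :
    TopD n (C a * X^w) = C (a * ((w:ℝ) - n)) * X^w := by
  unfold TopD
  cases w with
  | zero => simp; ring
  | succ w =>
    rw [derivative_mul, derivative_C, derivative_X_pow]
    push_cast
    simp only [map_sub, map_mul, map_add, map_one, map_natCast, zero_mul, zero_add,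
      Nat.add_sub_cancel]
    ring

lemma TopD_iter_monomial (n s : ℕ) (a : ℝ) (w : ℕ) :
    (TopD n)^[s] (C a * X^w) = C (a * ((w:ℝ) - n)^s) * X^w := by
  induction s generalizing a with
  | zero => simp
  | succ s ih =>
    rw [Function.iterate_succ_apply, TopD_monomial, ih, pow_succ]
    ring_nf

lemma main0 (n s : ℕ) (hs : s < 2*n) :
    ∑ m ∈ Finset.range (n+1), (n.choose m : ℝ) * (-1/2:ℝ)^(n-m) *
      ∑ j ∈ Finset.range (n-m+1), ((n-m).choose j : ℝ) * (2*(j:ℝ) - (n:ℝ) + (m:ℝ))^s = 0 := by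
  set p : ℝ[X] := ∑ m ∈ Finset.range (n+1), ∑ j ∈ Finset.range (n-m+1),
    C ((n.choose m : ℝ) * (-1/2:ℝ)^(n-m) * ((n-m).choose j : ℝ)) * X^(m+2*j) with hp
  have hpeq : p = C ((-1/2:ℝ)^n) * ((X:ℝ[X]) - 1)^(2*n) := by
    have h1 : p = ∑ m ∈ Finset.range (n+1),
        X^m * (C (-1/2:ℝ) * ((X:ℝ[X])^2 + 1))^(n-m) * ((n.choose m : ℕ) : ℝ[X]) := by
      refine Finset.sum_congr rfl fun m hm => ?_
      rw [mul_pow, add_pow]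
      simp only [Finset.mul_sum, Finset.sum_mul]
      refine Finset.sum_congr rfl fun j hj => ?_
      simp only [one_pow, mul_one, ← C_eq_natCast, C_mul, map_pow, pow_add, pow_mul]
      ring
    rw [h1, ← add_pow]
    have h2 : (X:ℝ[X]) + C (-1/2:ℝ) * ((X:ℝ[X])^2 + 1) = C (-1/2:ℝ) * ((X:ℝ[X]) - 1)^2 := by
      have hC : (C (-1/2:ℝ)) * 2 = -1 := by
        rw [show (2:ℝ[X]) = C (2:ℝ) from (map_ofNat C 2).symm, ← C_mul]
        norm_num
      linear_combination (X:ℝ[X]) * hC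
    rw [h2, mul_pow, ← pow_mul, ← map_pow]
  have hdvd : ((X:ℝ[X]) - 1) ∣ (TopD n)^[s] p := by
    have h3 : ((X:ℝ[X]) - 1)^1 ∣ (TopD n)^[s] p := by
      apply TopD_iter_dvd
      rw [hpeq]
      exact Dvd.dvd.mul_left (pow_dvd_pow _ (by omega)) _
    simpa using h3
  have heval : eval 1 ((TopD n)^[s] p) = 0 := by
    obtain ⟨q, hq⟩ := hdvd
    simp [hq]
  rw [hp, TopD_iter_sum] at heval
  rw [← heval, eval_finset_sum]
  refine Finset.sum_congr rfl fun m hm => ?_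
  rw [TopD_iter_sum, eval_finset_sum, Finset.mul_sum]
  refine Finset.sum_congr rfl fun j hj => ?_
  rw [TopD_iter_monomial]
  simp only [eval_mul, eval_C, eval_pow, eval_X, one_pow, mul_one]
  have harg : ((m + 2*j : ℕ) : ℝ) - (n:ℝ) = 2*(j:ℝ) - (n:ℝ) + (m:ℝ) := by push_cast; ring
  rw [harg]
  ring

/-- for integers `0 ≤ l ≤ k` and `0 ≤ s < 2(k - l)`,
`Σ_{i=0}^{k} C(k,i) C(i,l) (-1/2)^{k-i} Σ_{j=0}^{k-i} C(k-i,j) (2j-k+i)^s = 0`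
(with the convention `0^0 = 1`, which is the default for natural-number powers in ℝ). -/
theorem binomial_difference_identity (k l s : ℕ) (hlk : l ≤ k) (hs : s < 2 * (k - l)) :
    ∑ i ∈ Finset.range (k+1), (k.choose i : ℝ) * (i.choose l : ℝ) * (-1/2 : ℝ)^(k-i) *
      ∑ j ∈ Finset.range (k-i+1), ((k-i).choose j : ℝ) * (2*(j:ℝ) - (k:ℝ) + (i:ℝ))^s = 0 := by
  set n := k - l with hn
  have hkn : k = l + n := by omega
  have key := main0 n s hs
  set g : ℕ → ℝ := fun i => (k.choose i : ℝ) * (i.choose l : ℝ) * (-1/2 : ℝ)^(k-i) *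
      ∑ j ∈ Finset.range (k-i+1), ((k-i).choose j : ℝ) * (2*(j:ℝ) - (k:ℝ) + (i:ℝ))^s with hg
  have hsplit : ∑ i ∈ Finset.range (k+1), g i
      = ∑ i ∈ Finset.Ico 0 l, g i + ∑ i ∈ Finset.Ico l (k+1), g i := by
    rw [Finset.sum_Ico_consecutive _ (Nat.zero_le l) (by omega), Finset.range_eq_Ico]
  rw [hsplit]
  have h1 : ∑ i ∈ Finset.Ico 0 l, g i = 0 := by
    refine Finset.sum_eq_zero fun i hi => ?_
    have : i < l := (Finset.mem_Ico.mp hi).2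
    simp only [hg, Nat.choose_eq_zero_of_lt this]
    simp
  rw [h1, zero_add, Finset.sum_Ico_eq_sum_range]
  rw [show k + 1 - l = n + 1 by omega]
  have h2 : ∀ m ∈ Finset.range (n+1), g (l + m)
      = (k.choose l : ℝ) * ((n.choose m : ℝ) * (-1/2:ℝ)^(n-m) *
        ∑ j ∈ Finset.range (n-m+1), ((n-m).choose j : ℝ) * (2*(j:ℝ) - (n:ℝ) + (m:ℝ))^s) := by
    intro m hm
    have hmn : m ≤ n := Nat.lt_succ_iff.mp (Finset.mem_range.mp hm)
    have hch : k.choose (l+m) * (l+m).choose l = k.choose l * n.choose m := by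
      rw [Nat.choose_mul (by omega)]
      congr 2 <;> omega
    have hchR : (k.choose (l+m) : ℝ) * ((l+m).choose l : ℝ)
        = (k.choose l : ℝ) * (n.choose m : ℝ) := by exact_mod_cast congrArg (Nat.cast (R := ℝ)) hch
    have hk1 : k - (l+m) = n - m := by omega
    have harg : ∀ j : ℕ, 2*(j:ℝ) - (k:ℝ) + ((l+m:ℕ):ℝ) = 2*(j:ℝ) - (n:ℝ) + (m:ℝ) := by
      intro j; rw [hkn]; push_cast; ring
    simp only [hg, hk1]
    simp only [harg]
    linear_combination ((-1/2:ℝ)^(n-m) *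
      ∑ j ∈ Finset.range (n-m+1), ((n-m).choose j : ℝ) * (2*(j:ℝ) - (n:ℝ) + (m:ℝ))^s) * hchR
  rw [Finset.sum_congr rfl h2, ← Finset.mul_sum, key, mul_zero]
end

section
/- Let K : ℝ^d → ℝ be a shift-invariant kernel with K(0) = 1 admitting a Bochner representation with probability density p, and suppose p has finite second moment and ∫_{ℝ^d} ⟨ω, u⟩² p(ω) dω > 0 for every nonzero u ∈ ℝ^d. Then there exist constants c_K, R_K > 0 such that for every x with 0 < ‖x‖₁ ≤ R_K: (1 − K(x))/‖x‖₁² ≥ c_K/2. -/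
open MeasureTheory

noncomputable section

section auxGeom
variable {d : ℕ}

lemma coord_abs_le_norm (x : EuclideanSpace ℝ (Fin d)) (i : Fin d) : |x i| ≤ ‖x‖ := by
  rw [EuclideanSpace.norm_eq]
  have h1 : |x i|^2 ≤ ∑ j, ‖x j‖^2 := by
    have := Finset.single_le_sum (f := fun j => ‖x j‖^2) (fun j _ => by positivity)
      (Finset.mem_univ i)
    simpa [Real.norm_eq_abs, sq_abs] using this
  calc |x i| = Real.sqrt (|x i|^2) := by rw [Real.sqrt_sq_eq_abs, abs_abs]
  _ ≤ _ := Real.sqrt_le_sqrt h1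

lemma norm_le_l1 (x : EuclideanSpace ℝ (Fin d)) : ‖x‖ ≤ l1 x := by
  rw [EuclideanSpace.norm_eq]
  have h1 : ∑ j, ‖x j‖^2 ≤ (l1 x)^2 := by
    have := Finset.sum_sq_le_sq_sum_of_nonneg (s := Finset.univ) (f := fun j => |x j|)
      (fun j _ => abs_nonneg _)
    simpa [Real.norm_eq_abs, sq_abs, l1] using this
  calc Real.sqrt (∑ j, ‖x j‖^2) ≤ Real.sqrt ((l1 x)^2) := Real.sqrt_le_sqrt h1
  _ = l1 x := Real.sqrt_sq (Finset.sum_nonneg fun j _ => abs_nonneg _)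

lemma l1_sq_le (x : EuclideanSpace ℝ (Fin d)) : (l1 x)^2 ≤ d * ‖x‖^2 := by
  have := sq_sum_le_card_mul_sum_sq (s := Finset.univ) (f := fun j => |x j|)
  simp only [Finset.card_univ, Fintype.card_fin] at this
  calc (l1 x)^2 ≤ d * ∑ j, |x j|^2 := this
  _ = d * ‖x‖^2 := by
      congr 1
      rw [EuclideanSpace.norm_eq, Real.sq_sqrt (by positivity)]
      simp [sq_abs]
end auxGeom

section auxInt
variable {d : ℕ} {μp : Measure (EuclideanSpace ℝ (Fin d))} [IsProbabilityMeasure μp]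
  (hmom : Integrable (fun w => ‖w‖^2) μp)
include hmom

lemma integrable_coord_mul (i j : Fin d) :
    Integrable (fun w : EuclideanSpace ℝ (Fin d) => w i * w j) μp := by
  refine hmom.mono' ?_ (Filter.Eventually.of_forall fun w => ?_)
  · exact ((continuous_apply i).comp (PiLp.continuous_ofLp 2 _)).mul
      ((continuous_apply j).comp (PiLp.continuous_ofLp 2 _)) |>.aestronglyMeasurable
  · have hi := coord_abs_le_norm w i
    have hj := coord_abs_le_norm w j
    have hn : (0:ℝ) ≤ ‖w‖ := norm_nonneg _
    rw [Real.norm_eq_abs, abs_mul]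
    nlinarith [abs_nonneg (w i), abs_nonneg (w j)]

lemma integrable_inner_sq (x : EuclideanSpace ℝ (Fin d)) :
    Integrable (fun w : EuclideanSpace ℝ (Fin d) => (inner ℝ w x : ℝ)^2) μp := by
  refine (hmom.const_mul (‖x‖^2)).mono' ?_ (Filter.Eventually.of_forall fun w => ?_)
  · exact (((continuous_id.inner continuous_const).pow 2)).aestronglyMeasurable
  · have h := abs_real_inner_le_norm w x
    calc ‖(inner ℝ w x : ℝ)^2‖ = (inner ℝ w x : ℝ)^2 := by
          rw [Real.norm_eq_abs, abs_of_nonneg (sq_nonneg _)]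
    _ ≤ ‖x‖^2 * ‖w‖^2 := by
        nlinarith [sq_abs (inner ℝ w x : ℝ), abs_nonneg (inner ℝ w x : ℝ), norm_nonneg w, norm_nonneg x]

lemma f_eq_sum (u : EuclideanSpace ℝ (Fin d)) :
    ∫ w, (inner ℝ w u : ℝ)^2 ∂μp
      = ∑ i, ∑ j, (u i * u j) * ∫ w, w i * w j ∂μp := by
  have hrw : ∀ w : EuclideanSpace ℝ (Fin d),
      (inner ℝ w u : ℝ)^2 = ∑ i, ∑ j, (u i * u j) * (w i * w j) := by
    intro w
    rw [show (inner ℝ w u : ℝ) = ∑ i, w i * u i by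
      simp [PiLp.inner_apply, RCLike.inner_apply, conj_trivial, mul_comm]]
    rw [sq, Finset.sum_mul_sum]
    exact Finset.sum_congr rfl fun i _ => Finset.sum_congr rfl fun j _ => by ring
  simp_rw [hrw]
  rw [integral_finset_sum _ (fun i _ => integrable_finset_sum _
    (fun j _ => (integrable_coord_mul hmom i j).const_mul _))]
  exact Finset.sum_congr rfl fun i _ => by
    rw [integral_finset_sum _ (fun j _ => (integrable_coord_mul hmom i j).const_mul _)]
    exact Finset.sum_congr rfl fun j _ => integral_const_mul _ _

lemma f_continuous :
    Continuous (fun u : EuclideanSpace ℝ (Fin d) => ∫ w, (inner ℝ w u : ℝ)^2 ∂μp) := by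
  simp_rw [f_eq_sum hmom]
  fun_prop

omit hmom [IsProbabilityMeasure μp] in
lemma f_smul (r : ℝ) (u : EuclideanSpace ℝ (Fin d)) :
    ∫ w, (inner ℝ w (r • u) : ℝ)^2 ∂μp = r^2 * ∫ w, (inner ℝ w u : ℝ)^2 ∂μp := by
  simp_rw [real_inner_smul_right, mul_pow]
  exact integral_const_mul _ _
end auxInt

/-- strong convexity of `1 - K` near the origin. If `K` admits a Bochner
representation with a probability measure `μp` having finite second moment and non-degenerate
second moments in every direction, then there exist `c_K, R_K > 0` such that
`(1 - K(x))/‖x‖₁² ≥ c_K/2` for all `0 < ‖x‖₁ ≤ R_K`. -/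
theorem kernel_strongly_convex_near_origin {d : ℕ}
    (K : EuclideanSpace ℝ (Fin d) → ℝ) (hK0 : K 0 = 1)
    (μp : Measure (EuclideanSpace ℝ (Fin d))) [IsProbabilityMeasure μp]
    (hBochner : ∀ x, K x = ∫ w, Real.cos (inner ℝ w x : ℝ) ∂μp)
    (hmom : Integrable (fun w => ‖w‖^2) μp)
    (hnondeg : ∀ u : EuclideanSpace ℝ (Fin d), u ≠ 0 →
      0 < ∫ w, (inner ℝ w u : ℝ)^2 ∂μp) :
    ∃ cK > (0:ℝ), ∃ RK > (0:ℝ), ∀ x : EuclideanSpace ℝ (Fin d),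
      0 < l1 x → l1 x ≤ RK → (1 - K x) / (l1 x)^2 ≥ cK / 2 := by
  rcases Nat.eq_zero_or_pos d with hd | hd
  · subst hd
    exact ⟨1, one_pos, 1, one_pos, fun x hx1 _ => absurd hx1 (by simp [l1])⟩
  have hdR : (0:ℝ) < d := by exact_mod_cast hd
  set f : EuclideanSpace ℝ (Fin d) → ℝ := fun u => ∫ w, (inner ℝ w u : ℝ)^2 ∂μp with hfdef
  -- minimum of f on the unit sphere
  have hSne : (Metric.sphere (0:EuclideanSpace ℝ (Fin d)) 1).Nonempty :=
    ⟨EuclideanSpace.single ⟨0, hd⟩ 1, by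
      simp [EuclideanSpace.norm_single]⟩
  obtain ⟨u₀, hu₀S, hu₀min⟩ := (isCompact_sphere (0:EuclideanSpace ℝ (Fin d)) 1).exists_isMinOn hSne
    (f_continuous hmom).continuousOn
  set c := f u₀ with hcdef
  have hu₀ : ‖u₀‖ = 1 := by simpa using hu₀S
  have hc0 : 0 < c := hnondeg u₀ (by intro h; rw [h] at hu₀; simp at hu₀)
  have hflb : ∀ x : EuclideanSpace ℝ (Fin d), x ≠ 0 → c * ‖x‖^2 ≤ f x := by
    intro x hx
    have hnx : (0:ℝ) < ‖x‖ := norm_pos_iff.mpr hx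
    have hu : ‖(‖x‖⁻¹ • x)‖ = 1 := by
      rw [norm_smul, Real.norm_eq_abs, abs_of_pos (inv_pos.mpr hnx), inv_mul_cancel₀ hnx.ne']
    have h1 : c ≤ f (‖x‖⁻¹ • x) :=
      isMinOn_iff.mp hu₀min _ (by simpa using hu)
    have h2 : f x = ‖x‖^2 * f (‖x‖⁻¹ • x) := by
      conv_lhs => rw [show x = ‖x‖ • (‖x‖⁻¹ • x) by
        rw [smul_smul, mul_inv_cancel₀ hnx.ne', one_smul]]
      exact f_smul ‖x‖ _
    nlinarith
  -- tail of the second moment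
  have hUnion : ⋃ n : ℕ, Metric.closedBall (0:EuclideanSpace ℝ (Fin d)) n = Set.univ := by
    ext w
    simp only [Set.mem_iUnion, Metric.mem_closedBall, dist_zero_right, Set.mem_univ, iff_true]
    exact exists_nat_ge ‖w‖
  have hTend := MeasureTheory.tendsto_setIntegral_of_monotone
    (f := fun w : EuclideanSpace ℝ (Fin d) => ‖w‖^2) (μ := μp)
    (s := fun n : ℕ => Metric.closedBall (0:EuclideanSpace ℝ (Fin d)) n)
    (fun n => measurableSet_closedBall)
    (fun m n hmn => Metric.closedBall_subset_closedBall (by exact_mod_cast hmn))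
    (by rw [hUnion]; exact hmom.integrableOn)
  rw [hUnion, setIntegral_univ] at hTend
  have hev : ∀ᶠ n : ℕ in Filter.atTop,
      (∫ w, ‖w‖^2 ∂μp) - c/2 < ∫ w in Metric.closedBall (0:EuclideanSpace ℝ (Fin d)) n, ‖w‖^2 ∂μp :=
    hTend.eventually (eventually_gt_nhds (by linarith))
  obtain ⟨M, hMlt, hM1⟩ := (hev.and (Filter.eventually_ge_atTop 1)).exists
  have hMR : (1:ℝ) ≤ M := by exact_mod_cast hM1
  have hMtail : ∫ w in (Metric.closedBall (0:EuclideanSpace ℝ (Fin d)) M)ᶜ, ‖w‖^2 ∂μp ≤ c/2 := by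
    have hsplit := integral_add_compl
      (measurableSet_closedBall (x := (0:EuclideanSpace ℝ (Fin d))) (ε := (M:ℝ))) hmom
    linarith
  -- conclusion
  have hπ := Real.pi_pos
  refine ⟨2/Real.pi^2 * c / d, by positivity, Real.pi / M, by positivity, fun x hx1 hx2 => ?_⟩
  have hx0 : x ≠ 0 := by
    intro h; rw [h] at hx1; simp [l1] at hx1
  set S := Metric.closedBall (0:EuclideanSpace ℝ (Fin d)) (M:ℝ) with hSdef
  have hbound : ∀ w ∈ S, |(inner ℝ w x : ℝ)| ≤ Real.pi := by
    intro w hw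
    rw [hSdef, Metric.mem_closedBall, dist_zero_right] at hw
    have hwM : ‖w‖ ≤ (M:ℝ) := hw
    have hxR : ‖x‖ ≤ Real.pi / M := le_trans (norm_le_l1 x) hx2
    calc |(inner ℝ w x : ℝ)| ≤ ‖w‖ * ‖x‖ := abs_real_inner_le_norm w x
    _ ≤ M * (Real.pi / M) := by
        apply mul_le_mul hwM hxR (norm_nonneg _) (by positivity)
    _ = Real.pi := by field_simp
  have hIntCos : Integrable (fun w : EuclideanSpace ℝ (Fin d) => Real.cos (inner ℝ w x : ℝ)) μp := by
    refine (integrable_const (1:ℝ)).mono' ?_ (Filter.Eventually.of_forall fun w => ?_)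
    · exact (Real.continuous_cos.comp (continuous_id.inner continuous_const)).aestronglyMeasurable
    · simpa [Real.norm_eq_abs] using Real.abs_cos_le_one (inner ℝ w x : ℝ)
  have hIntSub : Integrable (fun w : EuclideanSpace ℝ (Fin d) => 1 - Real.cos (inner ℝ w x : ℝ)) μp :=
    (integrable_const 1).sub hIntCos
  have step1 : ∫ w, (1 - Real.cos (inner ℝ w x : ℝ)) ∂μp = 1 - K x := by
    rw [integral_sub (integrable_const 1) hIntCos, integral_const, probReal_univ, hBochner x]
    simp
  have step2 : ∫ w in S, (1 - Real.cos (inner ℝ w x : ℝ)) ∂μp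
      ≤ ∫ w, (1 - Real.cos (inner ℝ w x : ℝ)) ∂μp :=
    setIntegral_le_integral hIntSub (Filter.Eventually.of_forall fun w => by
      have := Real.cos_le_one (inner ℝ w x : ℝ); simp only [Pi.zero_apply]; linarith)
  have step3 : ∫ w in S, 2/Real.pi^2 * (inner ℝ w x : ℝ)^2 ∂μp
      ≤ ∫ w in S, (1 - Real.cos (inner ℝ w x : ℝ)) ∂μp := by
    refine setIntegral_mono_on ((integrable_inner_sq hmom x).const_mul _).integrableOn
      hIntSub.integrableOn measurableSet_closedBall fun w hw => ?_
    have := Real.cos_le_one_sub_mul_cos_sq (hbound w hw)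
    linarith
  have step4 : ∫ w in S, 2/Real.pi^2 * (inner ℝ w x : ℝ)^2 ∂μp
      = 2/Real.pi^2 * ∫ w in S, (inner ℝ w x : ℝ)^2 ∂μp := integral_const_mul _ _
  have htail2 : ∫ w in Sᶜ, (inner ℝ w x : ℝ)^2 ∂μp ≤ ‖x‖^2 * (c/2) := by
    calc ∫ w in Sᶜ, (inner ℝ w x : ℝ)^2 ∂μp
        ≤ ∫ w in Sᶜ, ‖x‖^2 * ‖w‖^2 ∂μp := by
          refine setIntegral_mono_on (integrable_inner_sq hmom x).integrableOn
            (hmom.const_mul _).integrableOn measurableSet_closedBall.compl fun w _ => ?_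
          nlinarith [abs_real_inner_le_norm w x, sq_abs (inner ℝ w x : ℝ),
            abs_nonneg (inner ℝ w x : ℝ), norm_nonneg w, norm_nonneg x]
    _ = ‖x‖^2 * ∫ w in Sᶜ, ‖w‖^2 ∂μp := integral_const_mul _ _
    _ ≤ ‖x‖^2 * (c/2) := mul_le_mul_of_nonneg_left hMtail (by positivity)
  have step5 : c/2 * ‖x‖^2 ≤ ∫ w in S, (inner ℝ w x : ℝ)^2 ∂μp := by
    have hsplit2 := integral_add_compl
      (measurableSet_closedBall (x := (0:EuclideanSpace ℝ (Fin d))) (ε := (M:ℝ))) (integrable_inner_sq hmom x)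
    have hgl := hflb x hx0
    rw [hfdef] at hgl
    simp only at hgl hsplit2
    linarith
  have key : 2/Real.pi^2 * (c/2 * ‖x‖^2) ≤ 1 - K x := by
    have h34 : 2/Real.pi^2 * (c/2 * ‖x‖^2) ≤ 2/Real.pi^2 * ∫ w in S, (inner ℝ w x : ℝ)^2 ∂μp :=
      mul_le_mul_of_nonneg_left step5 (by positivity)
    rw [← step1]
    calc 2/Real.pi^2 * (c/2 * ‖x‖^2) ≤ _ := h34
    _ = ∫ w in S, 2/Real.pi^2 * (inner ℝ w x : ℝ)^2 ∂μp := step4.symm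
    _ ≤ ∫ w in S, (1 - Real.cos (inner ℝ w x : ℝ)) ∂μp := step3
    _ ≤ _ := step2
  rw [ge_iff_le, le_div_iff₀ (by positivity : (0:ℝ) < (l1 x)^2)]
  have hl1 : (l1 x)^2 ≤ d * ‖x‖^2 := l1_sq_le x
  have hA : (0:ℝ) ≤ 2/Real.pi^2 * c / d / 2 := by positivity
  have h6 : 2/Real.pi^2 * c / d / 2 * (l1 x)^2 ≤ 2/Real.pi^2 * c / d / 2 * (d * ‖x‖^2) :=
    mul_le_mul_of_nonneg_left hl1 hA
  have h7 : 2/Real.pi^2 * c / d / 2 * (d * ‖x‖^2) = 2/Real.pi^2 * (c/2 * ‖x‖^2) := by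
    field_simp
  linarith
end
end
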